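/- Let (X₀, X₁) be bivariate normal with mean 0, unit variances and correlation δ ∈ (−1,1). Then the conditional distribution of X₀ given X₁ > 0 has density f(x) = 2·φ(x)·Φ(αx), where α = δ/√(1−δ²). -/

import Mathlib

open Real MeasureTheory ProbabilityTheory
open scoped NNReal ENNReal

/-- Standard normal density. -/
noncomputable def stdNormalPDF (x : ℝ) : ℝ :=
  (Real.sqrt (2 * Real.pi))⁻¹ * Real.exp (-x ^ 2 / 2)

/-- Standard normal distribution function. -/
noncomputable def stdNormalCDF (x : ℝ) : ℝ :=
  ∫ t in Set.Iic x, stdNormalPDF t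

/-- Density of the centered bivariate normal with unit variances and
correlation `δ`. -/
noncomputable def biNormalPDF (δ x y : ℝ) : ℝ :=
  (2 * Real.pi * Real.sqrt (1 - δ ^ 2))⁻¹ *
    Real.exp (-(x ^ 2 - 2 * δ * x * y + y ^ 2) / (2 * (1 - δ ^ 2)))

lemma std_eq_gauss : gaussianPDFReal 0 1 = stdNormalPDF := by
  funext x
  simp [gaussianPDFReal, stdNormalPDF, neg_div]

lemma map_neg_gauss : (gaussianReal 0 1).map (fun x : ℝ => -x) = gaussianReal 0 1 := by
  have h := gaussianReal_map_const_mul (μ := 0) (v := 1) (-1)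
  have h2 : (NNReal.mk ((-1:ℝ)^2) (sq_nonneg _)) * 1 = 1 := by
    ext; norm_num
  simp only [neg_one_mul, mul_zero, h2] at h
  exact h

lemma gauss_singleton (t : ℝ) : gaussianReal 0 1 {t} = 0 := by
  rw [gaussianReal_apply _ one_ne_zero]
  exact setLIntegral_measure_zero _ _ (Real.volume_singleton)

lemma gauss_Iio_eq_Iic (t : ℝ) : gaussianReal 0 1 (Set.Iio t) = gaussianReal 0 1 (Set.Iic t) := by
  refine le_antisymm (measure_mono Set.Iio_subset_Iic_self) ?_
  calc gaussianReal 0 1 (Set.Iic t) ≤ gaussianReal 0 1 (Set.Iio t) + gaussianReal 0 1 {t} := by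
        rw [← Set.Iio_union_right]; exact measure_union_le _ _
    _ = gaussianReal 0 1 (Set.Iio t) := by rw [gauss_singleton, add_zero]

lemma gauss_Ioi_eq_Iic (t : ℝ) :
    gaussianReal 0 1 (Set.Ioi (-t)) = gaussianReal 0 1 (Set.Iic t) := by
  conv_lhs => rw [← map_neg_gauss]
  rw [Measure.map_apply measurable_neg measurableSet_Ioi]
  have : (fun x : ℝ => -x) ⁻¹' Set.Ioi (-t) = Set.Iio t := by
    ext x; simp
  rw [this, gauss_Iio_eq_Iic]

lemma gauss_Iic_eq (t : ℝ) :
    gaussianReal 0 1 (Set.Iic t) = ENNReal.ofReal (stdNormalCDF t) := by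
  rw [gaussianReal_apply_eq_integral _ one_ne_zero, std_eq_gauss, stdNormalCDF]

lemma gaussianReal_Ioi_zero (m : ℝ) (v : ℝ≥0) (hv : v ≠ 0) :
    gaussianReal m v (Set.Ioi 0) = ENNReal.ofReal (stdNormalCDF (m / Real.sqrt v)) := by
  have hvpos : (0:ℝ) < (v:ℝ) := by positivity
  have hs : (0:ℝ) < Real.sqrt v := Real.sqrt_pos.mpr hvpos
  have h2 : (NNReal.mk ((Real.sqrt v)^2) (sq_nonneg _)) * 1 = v := by
    ext; simp [Real.sq_sqrt v.2]
  have hmap : gaussianReal m v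
      = ((gaussianReal 0 1).map ((Real.sqrt v : ℝ) * ·)).map (· + m) := by
    rw [gaussianReal_map_const_mul, h2, mul_zero, gaussianReal_map_add_const, zero_add]
  rw [hmap, Measure.map_apply (measurable_add_const m) measurableSet_Ioi]
  have hpre1 : (· + m) ⁻¹' Set.Ioi 0 = Set.Ioi (-m) := by
    ext x; simp [neg_lt_iff_pos_add']
  rw [hpre1, Measure.map_apply (measurable_const_mul _) measurableSet_Ioi]
  have hpre2 : ((Real.sqrt v : ℝ) * ·) ⁻¹' Set.Ioi (-m) = Set.Ioi (-(m / Real.sqrt v)) := by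
    ext x
    simp only [Set.mem_preimage, Set.mem_Ioi]
    rw [mul_comm, ← div_lt_iff₀ hs, neg_div]
  rw [hpre2, gauss_Ioi_eq_Iic, gauss_Iic_eq]

lemma gauss_half : gaussianReal 0 1 (Set.Ioi (0:ℝ)) = 1/2 := by
  have hIio : gaussianReal 0 1 (Set.Iio (0:ℝ)) = gaussianReal 0 1 (Set.Ioi (0:ℝ)) := by
    conv_lhs => rw [← map_neg_gauss]
    rw [Measure.map_apply measurable_neg measurableSet_Iio]
    congr 1
    ext x; simp
  have hsum : gaussianReal 0 1 (Set.Iio (0:ℝ)) + gaussianReal 0 1 (Set.Ici (0:ℝ)) = 1 := by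
    rw [← measure_union (Set.Iio_disjoint_Ici le_rfl) measurableSet_Ici,
      Set.Iio_union_Ici, measure_univ]
  have hIci : gaussianReal 0 1 (Set.Ici (0:ℝ)) = gaussianReal 0 1 (Set.Ioi (0:ℝ)) := by
    refine le_antisymm ?_ (measure_mono Set.Ioi_subset_Ici_self)
    calc gaussianReal 0 1 (Set.Ici (0:ℝ)) ≤ gaussianReal 0 1 (Set.Ioi (0:ℝ)) + gaussianReal 0 1 {(0:ℝ)} := by
          rw [← Set.Ioi_union_left]; exact measure_union_le _ _
      _ = gaussianReal 0 1 (Set.Ioi (0:ℝ)) := by rw [gauss_singleton, add_zero]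
  rw [hIio, hIci] at hsum
  have hne : gaussianReal 0 1 (Set.Ioi (0:ℝ)) ≠ ⊤ := measure_ne_top _ _
  rw [ENNReal.eq_div_iff (by norm_num) (by norm_num), two_mul]
  exact hsum


lemma biNormal_symm (δ x y : ℝ) : biNormalPDF δ x y = biNormalPDF δ y x := by
  unfold biNormalPDF; ring_nf

lemma biNormal_decomp {δ : ℝ} (h : 0 < 1 - δ ^ 2) (x y : ℝ) :
    biNormalPDF δ x y
      = gaussianPDFReal 0 1 x * gaussianPDFReal (δ * x) (NNReal.mk (1 - δ ^ 2) h.le) y := by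
  have h2π : (0:ℝ) ≤ 2 * π := by positivity
  have hne : (1 - δ ^ 2) ≠ 0 := ne_of_gt h
  unfold biNormalPDF gaussianPDFReal
  rw [NNReal.coe_one, NNReal.coe_mk, mul_one (2 * π), sub_zero, mul_one 2,
    mul_mul_mul_comm, ← Real.exp_add, ← mul_inv]
  congr 1
  · congr 1
    rw [Real.sqrt_mul h2π, ← mul_assoc, Real.mul_self_sqrt h2π]
  · field_simp
    ring


/-- If `(X₀, X₁)` is bivariate normal with mean `0`, unit variances and
correlation `δ ∈ (-1,1)`, then the conditional distribution of `X₀` given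
`X₁ > 0` has density `x ↦ 2 φ(x) Φ(αx)` with `α = δ/√(1-δ²)`. -/
theorem conditional_biNormal_is_skew_normal (δ : ℝ) (hδ : δ ∈ Set.Ioo (-1 : ℝ) 1) :
    Measure.map Prod.fst
      (ProbabilityTheory.cond
        ((volume : Measure (ℝ × ℝ)).withDensity
          (fun p => ENNReal.ofReal (biNormalPDF δ p.1 p.2)))
        {p : ℝ × ℝ | 0 < p.2}) =
    (volume : Measure ℝ).withDensity
      (fun x => ENNReal.ofReal
        (2 * stdNormalPDF x * stdNormalCDF (δ / Real.sqrt (1 - δ ^ 2) * x))) := by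
  obtain ⟨h1, h2⟩ := hδ
  have hpos : 0 < 1 - δ ^ 2 := by nlinarith
  have hvcoe : (((NNReal.mk (1 - δ ^ 2) hpos.le)) : ℝ) = 1 - δ ^ 2 := rfl
  have hvne : (NNReal.mk (1 - δ ^ 2) hpos.le) ≠ 0 := by
    intro h; rw [h] at hvcoe; norm_num at hvcoe; linarith
  have hA : MeasurableSet {p : ℝ × ℝ | 0 < p.2} :=
    measurableSet_lt measurable_const measurable_snd
  have hcont : Continuous fun p : ℝ × ℝ => biNormalPDF δ p.1 p.2 := by
    unfold biNormalPDF; fun_prop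
  have hmf : Measurable fun p : ℝ × ℝ => ENNReal.ofReal (biNormalPDF δ p.1 p.2) :=
    hcont.measurable.ennreal_ofReal
  have hPDFnn : ∀ x, 0 ≤ stdNormalPDF x := fun x => by unfold stdNormalPDF; positivity
  have hCDFnn : ∀ t, 0 ≤ stdNormalCDF t := fun t =>
    integral_nonneg fun x => hPDFnn x
  have hPDFcont : Continuous stdNormalPDF := by unfold stdNormalPDF; fun_prop
  have hCDFmeas : Measurable stdNormalCDF := by
    refine Monotone.measurable fun a b hab => ?_
    refine setIntegral_mono_set ?_ (ae_of_all _ hPDFnn)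
      ((Set.Iic_subset_Iic.mpr hab).eventuallyLE)
    exact (std_eq_gauss ▸ (integrable_gaussianPDFReal 0 1)).integrableOn
  have inner : ∀ x : ℝ, ∫⁻ y in Set.Ioi 0, ENNReal.ofReal (biNormalPDF δ x y)
      = ENNReal.ofReal (stdNormalPDF x)
        * ENNReal.ofReal (stdNormalCDF (δ / Real.sqrt (1 - δ ^ 2) * x)) := by
    intro x
    have hpt : ∀ y, ENNReal.ofReal (biNormalPDF δ x y)
        = ENNReal.ofReal (stdNormalPDF x)
          * ENNReal.ofReal (gaussianPDFReal (δ * x) (NNReal.mk (1 - δ ^ 2) hpos.le) y) := by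
      intro y
      rw [biNormal_decomp hpos, std_eq_gauss,
        ENNReal.ofReal_mul (hPDFnn x)]
    simp_rw [hpt]
    rw [lintegral_const_mul _ ((measurable_gaussianPDFReal _ _).ennreal_ofReal)]
    congr 1
    have happ : (∫⁻ y in Set.Ioi (0:ℝ),
        ENNReal.ofReal (gaussianPDFReal (δ * x) (NNReal.mk (1 - δ ^ 2) hpos.le) y))
        = gaussianReal (δ * x) (NNReal.mk (1 - δ ^ 2) hpos.le) (Set.Ioi 0) :=
      (gaussianReal_apply _ hvne _).symm
    rw [happ, gaussianReal_Ioi_zero _ _ hvne]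
    simp only [NNReal.coe_mk]
    rw [mul_div_right_comm]
  have key : ∀ s : Set ℝ, MeasurableSet s →
      ((volume : Measure (ℝ × ℝ)).withDensity
          (fun p => ENNReal.ofReal (biNormalPDF δ p.1 p.2)))
        ({p : ℝ × ℝ | 0 < p.2} ∩ Prod.fst ⁻¹' s)
      = ∫⁻ x in s, ENNReal.ofReal (stdNormalPDF x)
          * ENNReal.ofReal (stdNormalCDF (δ / Real.sqrt (1 - δ ^ 2) * x)) := by
    intro s hs
    have hset : {p : ℝ × ℝ | 0 < p.2} ∩ Prod.fst ⁻¹' s = s ×ˢ Set.Ioi (0:ℝ) := by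
      ext p; simp [Set.mem_prod, and_comm]
    rw [hset, withDensity_apply _ (hs.prod measurableSet_Ioi), Measure.volume_eq_prod,
      ← Measure.prod_restrict, lintegral_prod _ hmf.aemeasurable]
    exact lintegral_congr fun x => inner x
  have hhalf : ((volume : Measure (ℝ × ℝ)).withDensity
      (fun p => ENNReal.ofReal (biNormalPDF δ p.1 p.2))) {p : ℝ × ℝ | 0 < p.2} = 1/2 := by
    have hset : {p : ℝ × ℝ | 0 < p.2} = (Set.univ : Set ℝ) ×ˢ Set.Ioi (0:ℝ) := by
      ext p; simp
    rw [hset, withDensity_apply _ (MeasurableSet.univ.prod measurableSet_Ioi),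
      Measure.volume_eq_prod, ← Measure.prod_restrict,
      lintegral_prod_symm _ hmf.aemeasurable, Measure.restrict_univ]
    have hin : ∀ y : ℝ, (∫⁻ x, ENNReal.ofReal (biNormalPDF δ x y))
        = ENNReal.ofReal (gaussianPDFReal 0 1 y) := by
      intro y
      have hsymm : ∀ x, ENNReal.ofReal (biNormalPDF δ x y)
          = ENNReal.ofReal (gaussianPDFReal 0 1 y)
            * ENNReal.ofReal (gaussianPDFReal (δ * y) (NNReal.mk (1 - δ ^ 2) hpos.le) x) := by
        intro x
        rw [biNormal_symm, biNormal_decomp hpos,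
          ENNReal.ofReal_mul (gaussianPDFReal_nonneg _ _ _)]
      simp_rw [hsymm]
      rw [lintegral_const_mul _ ((measurable_gaussianPDFReal _ _).ennreal_ofReal),
        lintegral_gaussianPDFReal_eq_one _ hvne, mul_one]
    calc (∫⁻ y in Set.Ioi (0:ℝ), ∫⁻ x, ENNReal.ofReal (biNormalPDF δ x y))
        = ∫⁻ y in Set.Ioi (0:ℝ), ENNReal.ofReal (gaussianPDFReal 0 1 y) :=
          lintegral_congr fun y => hin y
      _ = gaussianReal 0 1 (Set.Ioi 0) := (gaussianReal_apply _ one_ne_zero _).symm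
      _ = 1/2 := gauss_half
  ext s hs
  rw [Measure.map_apply measurable_fst hs, ProbabilityTheory.cond_apply hA,
    key s hs, hhalf, withDensity_apply _ hs]
  have hmg : Measurable fun x : ℝ => ENNReal.ofReal (stdNormalPDF x)
      * ENNReal.ofReal (stdNormalCDF (δ / Real.sqrt (1 - δ ^ 2) * x)) :=
    (hPDFcont.measurable.ennreal_ofReal).mul
      ((hCDFmeas.comp (measurable_const_mul _)).ennreal_ofReal)
  rw [← lintegral_const_mul _ hmg]
  refine lintegral_congr fun x => ?_
  have h12 : ((1:ℝ≥0∞)/2)⁻¹ = 2 := by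
    rw [one_div, inv_inv]
  rw [h12, ENNReal.ofReal_mul (mul_nonneg (by norm_num) (hPDFnn x)),
    ENNReal.ofReal_mul (by norm_num : (0:ℝ) ≤ 2), ENNReal.ofReal_ofNat, mul_assoc]
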